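/- Theorem 1 (equality characterization of the access bound). Under the hypotheses of the total access bound of Theorem 1 (an (n,k,l) MDS linear array code C over F; an hl × nl matrix P with rows in C^⊥, 1 ≤ h ≤ min{u, s̄u − v}; rank [P_{j'_1},…,P_{j'_h}] = hl for failed nodes in host rack e'; P̄_e = 0 for e ∉ R ∪ {e'} where |R| = d̄; s̄ · rank P̄_e = hl for e ∈ R), assume in addition v > 0. Then s̄(u−v) · ∑_{e∈R} acs(P̄_e) = h·d̄·u·l holds if and only if s̄(u−v) · acs(P_{eu+g}) = h·l for every e ∈ R and every g ∈ {0,…,u−1}. -/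

import Mathlib

open Finset

/-- If every `w`-subset of `A` has `f`-sum at least `w*q`, then the total sum is
at least `A.card * q`. -/
lemma aux_sum_ge {α : Type*} [DecidableEq α] (w q : ℕ) (hw : 0 < w) :
    ∀ (n : ℕ) (A : Finset α) (f : α → ℕ), A.card = w + n →
      (∀ S ⊆ A, S.card = w → w * q ≤ ∑ g ∈ S, f g) →
      A.card * q ≤ ∑ g ∈ A, f g := by
  intro n
  induction n with
  | zero =>
    intro A f hA hsub
    have := hsub A subset_rfl (by omega)
    rw [hA]
    simpa using this
  | succ n ih =>
    intro A f hA hsub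
    have hne : A.Nonempty := card_pos.1 (by omega)
    obtain ⟨gm, hgm, hmax⟩ := A.exists_max_image f hne
    have herase : (A.erase gm).card = w + n := by
      rw [card_erase_of_mem hgm]; omega
    have hsub' : ∀ S ⊆ A.erase gm, S.card = w → w * q ≤ ∑ g ∈ S, f g :=
      fun S hS hc => hsub S (hS.trans (erase_subset _ _)) hc
    have h1 := ih (A.erase gm) f herase hsub'
    obtain ⟨S, hS, hScard⟩ := Finset.exists_subset_card_eq (show w ≤ (A.erase gm).card by omega)
    have h2 : w * q ≤ ∑ g ∈ S, f g := hsub' S hS hScard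
    have h3 : ∑ g ∈ S, f g ≤ w * f gm := by
      calc ∑ g ∈ S, f g ≤ ∑ _g ∈ S, f gm :=
            sum_le_sum fun g hg => hmax g (erase_subset _ _ (hS hg))
        _ = w * f gm := by rw [sum_const, hScard, smul_eq_mul]
    have hq : q ≤ f gm := Nat.le_of_mul_le_mul_left (h2.trans h3) hw
    have h4 : f gm + ∑ x ∈ A.erase gm, f x = ∑ x ∈ A, f x :=
      Finset.add_sum_erase _ f hgm
    have h5 : A.card * q = (w + n) * q + q := by rw [hA]; ring
    rw [herase] at h1
    omega

lemma aux_eq_of_ge {α : Type*} [DecidableEq α] (A : Finset α) (f : α → ℕ) (q : ℕ)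
    (hge : ∀ g ∈ A, q ≤ f g) (he : ∑ g ∈ A, f g = A.card * q) :
    ∀ g ∈ A, f g = q := by
  intro g hg
  obtain ⟨m, hm⟩ : ∃ m, A.card = m + 1 :=
    ⟨A.card - 1, by have := Finset.card_pos.2 ⟨g, hg⟩; omega⟩
  have h1 : m * q ≤ ∑ x ∈ A.erase g, f x := by
    calc m * q = ∑ _x ∈ A.erase g, q := by
          rw [sum_const, card_erase_of_mem hg, hm, smul_eq_mul]; simp
      _ ≤ ∑ x ∈ A.erase g, f x :=
          sum_le_sum fun x hx => hge x (mem_of_mem_erase hx)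
  have h2 : f g + ∑ x ∈ A.erase g, f x = A.card * q := by
    rw [Finset.add_sum_erase _ f hg, he]
  have h3 : A.card * q = m * q + q := by rw [hm]; ring
  have h4 := hge g hg
  omega

lemma aux_eq_of_le {α : Type*} [DecidableEq α] (A : Finset α) (f : α → ℕ) (q : ℕ)
    (hle : ∀ g ∈ A, f g ≤ q) (he : ∑ g ∈ A, f g = A.card * q) :
    ∀ g ∈ A, f g = q := by
  intro g hg
  obtain ⟨m, hm⟩ : ∃ m, A.card = m + 1 :=
    ⟨A.card - 1, by have := Finset.card_pos.2 ⟨g, hg⟩; omega⟩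
  have h1 : ∑ x ∈ A.erase g, f x ≤ m * q := by
    calc ∑ x ∈ A.erase g, f x ≤ ∑ _x ∈ A.erase g, q :=
          sum_le_sum fun x hx => hle x (mem_of_mem_erase hx)
      _ = m * q := by rw [sum_const, card_erase_of_mem hg, hm, smul_eq_mul]; simp
  have h2 : f g + ∑ x ∈ A.erase g, f x = A.card * q := by
    rw [Finset.add_sum_erase _ f hg, he]
  have h3 : A.card * q = m * q + q := by rw [hm]; ring
  have h4 := hle g hg
  omega

/-- Rigidity: if every `w`-subset sums to at least `w*q`, `w < A.card`, and the
total equals `A.card * q`, then every value equals `q`. -/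
lemma aux_all_eq {α : Type*} [DecidableEq α] (w q : ℕ) (hw : 0 < w) (A : Finset α)
    (f : α → ℕ) (hlt : w < A.card)
    (hsub : ∀ S ⊆ A, S.card = w → w * q ≤ ∑ g ∈ S, f g)
    (he : ∑ g ∈ A, f g = A.card * q) : ∀ g ∈ A, f g = q := by
  have hle : ∀ g ∈ A, f g ≤ q := by
    intro g hg
    obtain ⟨m, hm⟩ : ∃ m, A.card = m + 1 := ⟨A.card - 1, by omega⟩
    have h1 : (A.erase g).card * q ≤ ∑ x ∈ A.erase g, f x := by
      apply aux_sum_ge w q hw ((A.erase g).card - w) _ f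
      · rw [card_erase_of_mem hg]; omega
      · exact fun S hS hc => hsub S (hS.trans (erase_subset _ _)) hc
    rw [card_erase_of_mem hg, hm] at h1
    simp only [Nat.add_sub_cancel] at h1
    have h2 : f g + ∑ x ∈ A.erase g, f x = A.card * q := by
      rw [Finset.add_sum_erase _ f hg, he]
    have h3 : A.card * q = m * q + q := by rw [hm]; ring
    omega
  exact aux_eq_of_le A f q hle he

open Module LinearMap Matrix

section LA

variable {F : Type*} [Field F] {V W : Type*} [AddCommGroup V] [Module F V]
  [AddCommGroup W] [Module F W] [FiniteDimensional F V] [FiniteDimensional F W]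

lemma finrank_le_inf_ker_add_range (V' : Submodule F V) (f : V →ₗ[F] W) :
    finrank F V' ≤ finrank F ↥(V' ⊓ ker f) + finrank F ↥(range f) := by
  have h1 := finrank_range_add_finrank_ker (f.domRestrict V')
  have h2 : finrank F ↥(range (f.domRestrict V')) ≤ finrank F ↥(range f) := by
    apply Submodule.finrank_mono
    rintro _ ⟨x, rfl⟩
    exact ⟨x, rfl⟩
  have h3 : ker (f.domRestrict V') = (ker f).comap V'.subtype :=
    ker_domRestrict V' f
  have h4 : finrank F ↥((ker f).comap V'.subtype) = finrank F ↥(V' ⊓ ker f) := by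
    rw [show V' ⊓ ker f = Submodule.map V'.subtype ((ker f).comap V'.subtype) from
      (Submodule.map_comap_subtype V' (ker f)).symm]
    exact (Submodule.equivMapOfInjective V'.subtype (Submodule.injective_subtype V')
      _).finrank_eq
  rw [h3, h4] at h1
  omega

lemma finrank_le_iInf_ker_add_sum {ι : Type*} [DecidableEq ι] (t : Finset ι)
    (c : ι → V →ₗ[F] W) :
    finrank F V ≤ finrank F ↥(⨅ i ∈ t, ker (c i)) +
      ∑ i ∈ t, finrank F ↥(range (c i)) := by
  induction t using Finset.induction_on with
  | empty =>
    have : (⨅ i ∈ (∅ : Finset ι), ker (c i)) = ⊤ := by simp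
    rw [this, Finset.sum_empty, finrank_top]
    simp
  | @insert a s ha ih =>
    rw [Finset.iInf_insert, Finset.sum_insert ha]
    have step := finrank_le_inf_ker_add_range (⨅ i ∈ s, ker (c i)) (c a)
    have : finrank F ↥((⨅ i ∈ s, ker (c i)) ⊓ ker (c a)) =
        finrank F ↥(ker (c a) ⊓ ⨅ i ∈ s, ker (c i)) := by rw [inf_comm]
    omega

lemma rank_range_le_support {m n : Type*} [Fintype m] [Fintype n] [DecidableEq n]
    (M : Matrix m n F) (T : Finset n) (hT : ∀ r c, c ∉ T → M r c = 0) :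
    finrank F ↥(range (Matrix.mulVecLin Mᵀ)) ≤ T.card := by
  classical
  rw [Matrix.range_mulVecLin, Matrix.col, Matrix.transpose_transpose]
  have hle : Submodule.span F (Set.range M) ≤
      Submodule.span F ((T.image fun c0 => (Pi.single c0 (1 : F) : n → F)) : Set (n → F)) := by
    rw [Submodule.span_le]
    rintro _ ⟨r, rfl⟩
    have hMr : M r = ∑ c0 ∈ T, M r c0 • (Pi.single c0 (1 : F) : n → F) := by
      funext j
      simp only [Finset.sum_apply, Pi.smul_apply, Pi.single_apply, smul_eq_mul,
        mul_ite, mul_one, mul_zero]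
      rw [Finset.sum_ite_eq T j (M r)]
      by_cases hj : j ∈ T
      · simp [hj]
      · simp [hj, hT r j hj]
    rw [hMr]
    exact Submodule.sum_mem _ fun c0 hc0 => Submodule.smul_mem _ _
      (Submodule.subset_span (Finset.mem_coe.2 (Finset.mem_image_of_mem _ hc0)))
  calc finrank F ↥(Submodule.span F (Set.range M))
      ≤ finrank F ↥(Submodule.span F ((T.image fun c0 => (Pi.single c0 (1 : F) : n → F)) : Set (n → F))) :=
        Submodule.finrank_mono hle
    _ ≤ (T.image fun c0 => (Pi.single c0 (1 : F) : n → F)).card :=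
        finrank_span_finset_le_card _
    _ ≤ T.card := Finset.card_image_le

end LA

open Module LinearMap Matrix Finset

lemma access_key
    (F : Type*) [Field F] [DecidableEq F]
    (u nb kb v db sb l h : ℕ)
    (hkb : 1 ≤ kb) (hv : v < u)
    (hdb1 : kb ≤ db) (hsb : sb = db - kb + 1)
    (C : Submodule F ((Fin nb × Fin u) → Fin l → F))
    (hdim : Module.finrank F C = (kb * u + v) * l)
    (hMDS : ∀ c ∈ C, ∀ S : Finset (Fin nb × Fin u), S.card = kb * u + v →
      (∀ j ∈ S, c j = 0) → c = 0)
    (P : Matrix (Fin (h * l)) ((Fin nb × Fin u) × Fin l) F)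
    (hdual : ∀ ρ : Fin (h * l), ∀ c ∈ C,
      ∑ j : Fin nb × Fin u, ∑ i : Fin l, P ρ (j, i) * c j i = 0)
    (e' : Fin nb) (g' : Fin h → Fin u)
    (hrank1 : (Matrix.of fun ρ (bi : Fin h × Fin l) =>
      P ρ ((e', g' bi.1), bi.2)).rank = h * l)
    (R : Finset (Fin nb)) (hR : R.card = db) (he'R : e' ∉ R)
    (hzero : ∀ e : Fin nb, e ∉ R → e ≠ e' → ∀ ρ g i, P ρ ((e, g), i) = 0)
    (hrankR : ∀ e ∈ R,
      sb * (Matrix.of fun ρ (gi : Fin u × Fin l) =>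
        P ρ ((e, gi.1), gi.2)).rank = h * l)
    (e0 : Fin nb) (he0 : e0 ∈ R) (S : Finset (Fin u)) (hS : S.card = u - v) :
    h * l ≤ sb * ∑ g ∈ S, (Finset.univ.filter
      (fun i : Fin l => ∃ ρ, P ρ ((e0, g), i) ≠ 0)).card := by
  classical
  -- choose sb - 1 other helper racks to zero out
  obtain ⟨E, hER, hEcard⟩ := Finset.exists_subset_card_eq
    (show sb - 1 ≤ (R.erase e0).card by rw [Finset.card_erase_of_mem he0, hR]; omega)
  have hEsubR : E ⊆ R := hER.trans (Finset.erase_subset _ _)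
  have he0E : e0 ∉ E := fun hx => (Finset.notMem_erase e0 R) (hER hx)
  -- the matrices
  set Pe : Fin nb → Matrix (Fin (h * l)) (Fin u × Fin l) F :=
    fun e => Matrix.of fun ρ gi => P ρ ((e, gi.1), gi.2) with hPe
  set Qm : Fin u → Matrix (Fin (h * l)) (Fin u × Fin l) F :=
    fun g => Matrix.of fun ρ gi => if gi.1 = g then P ρ ((e0, gi.1), gi.2) else 0 with hQm
  set cmap : (Fin nb ⊕ Fin u) → (Fin (h * l) → F) →ₗ[F] ((Fin u × Fin l) → F) :=
    Sum.elim (fun e => Matrix.mulVecLin (Pe e)ᵀ) (fun g => Matrix.mulVecLin (Qm g)ᵀ)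
      with hcmap
  -- the support set
  set Rk : Finset (Fin nb) := insert e' ((R \ E).erase e0) with hRk
  set SJ : Finset (Fin nb × Fin u) :=
    Rk ×ˢ Finset.univ ∪ {e0} ×ˢ (Finset.univ \ S) with hSJ
  have he'notin : e' ∉ (R \ E).erase e0 :=
    fun hx => he'R (Finset.mem_sdiff.1 (Finset.mem_of_mem_erase hx)).1
  have he0R_E : e0 ∈ R \ E := Finset.mem_sdiff.2 ⟨he0, he0E⟩
  have hRkcard : Rk.card = kb := by
    rw [hRk, Finset.card_insert_of_notMem he'notin, Finset.card_erase_of_mem he0R_E,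
      Finset.card_sdiff_of_subset hEsubR, hR, hEcard]
    omega
  have he0Rk : e0 ∉ Rk := by
    rw [hRk, Finset.mem_insert]
    push_neg
    exact ⟨fun hh => he'R (hh ▸ he0), Finset.notMem_erase _ _⟩
  have hdisj : Disjoint (Rk ×ˢ (Finset.univ : Finset (Fin u)))
      ({e0} ×ˢ (Finset.univ \ S)) := by
    rw [Finset.disjoint_left]
    rintro ⟨e, g⟩ h1 h2
    have h1' := (Finset.mem_product.1 h1).1
    have h2' := (Finset.mem_product.1 h2).1
    rw [Finset.mem_singleton] at h2'
    subst h2'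
    exact he0Rk h1'
  have hSJcard : SJ.card = kb * u + v := by
    rw [hSJ, Finset.card_union_of_disjoint hdisj, Finset.card_product, Finset.card_product,
      Finset.card_univ, Fintype.card_fin, hRkcard, Finset.card_singleton,
      Finset.card_sdiff_of_subset (Finset.subset_univ S), Finset.card_univ, Fintype.card_fin, hS]
    omega
  -- projection to SJ is surjective from C (MDS)
  set proj : ↥C →ₗ[F] (↥SJ → Fin l → F) :=
    (LinearMap.funLeft F (Fin l → F) (fun j : ↥SJ => (j : Fin nb × Fin u))).comp C.subtype
      with hproj
  have hinj : Function.Injective proj := by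
    rw [← LinearMap.ker_eq_bot, Submodule.eq_bot_iff]
    rintro ⟨cv, hcv⟩ hker
    have h0 := LinearMap.mem_ker.1 hker
    have h0' : ∀ j : ↥SJ, cv (j : Fin nb × Fin u) = 0 := fun j => congrFun h0 j
    exact Subtype.ext (hMDS cv hcv SJ hSJcard (fun j hj => h0' ⟨j, hj⟩))
  have hfr2 : Module.finrank F ↥C = Module.finrank F (↥SJ → Fin l → F) := by
    rw [hdim, Module.finrank_pi_fintype]
    have : ∑ _j : ↥SJ, Module.finrank F (Fin l → F) = SJ.card * l := by
      rw [Finset.sum_const, Finset.card_univ, Fintype.card_coe, smul_eq_mul,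
        Module.finrank_pi, Fintype.card_fin]
    rw [this, hSJcard]
  have hsurj : Function.Surjective proj :=
    (LinearMap.injective_iff_surjective_of_finrank_eq_finrank hfr2).1 hinj
  -- the kernel of all constraints is trivial
  have hbot : (⨅ i ∈ E.disjSum S, LinearMap.ker (cmap i)) = ⊥ := by
    rw [eq_bot_iff]
    intro x hx
    simp only [Submodule.mem_iInf] at hx
    have hxE : ∀ e ∈ E, ∀ g : Fin u, ∀ i : Fin l,
        ∑ ρ, P ρ ((e, g), i) * x ρ = 0 := by
      intro e he g i
      have hk := LinearMap.mem_ker.1 (hx (Sum.inl e) (Finset.inl_mem_disjSum.2 he))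
      have hk2 := congrFun hk (g, i)
      simpa [hcmap, hPe, Matrix.mulVecLin_apply, Matrix.mulVec, Matrix.vecMul,
        dotProduct, Matrix.transpose_apply, mul_comm] using hk2
    have hxS : ∀ g ∈ S, ∀ i : Fin l, ∑ ρ, P ρ ((e0, g), i) * x ρ = 0 := by
      intro g hg i
      have hk := LinearMap.mem_ker.1 (hx (Sum.inr g) (Finset.inr_mem_disjSum.2 hg))
      have hk2 := congrFun hk (g, i)
      simpa [hcmap, hQm, Matrix.mulVecLin_apply, Matrix.mulVec, Matrix.vecMul,
        dotProduct, Matrix.transpose_apply, mul_comm] using hk2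
    -- support of the dual combination
    have hsupp : ∀ j : Fin nb × Fin u, j ∉ SJ → ∀ i, ∑ ρ, P ρ (j, i) * x ρ = 0 := by
      rintro ⟨e, g⟩ hj i
      by_cases heR : e ∈ R
      · by_cases heE : e ∈ E
        · exact hxE e heE g i
        · by_cases he0' : e = e0
          · subst he0'
            have hgS : g ∈ S := by
              by_contra hgS
              exact hj (Finset.mem_union_right _ (Finset.mem_product.2
                ⟨Finset.mem_singleton_self e, Finset.mem_sdiff.2 ⟨Finset.mem_univ g, hgS⟩⟩))
            exact hxS g hgS i
          · exact absurd (Finset.mem_union_left _ (Finset.mem_product.2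
              ⟨Finset.mem_insert_of_mem
                (Finset.mem_erase.2 ⟨he0', Finset.mem_sdiff.2 ⟨heR, heE⟩⟩),
                Finset.mem_univ g⟩)) hj
      · by_cases hee' : e = e'
        · exact absurd (Finset.mem_union_left _ (Finset.mem_product.2
            ⟨by rw [hee']; exact Finset.mem_insert_self _ _, Finset.mem_univ g⟩)) hj
        · have hz := hzero e heR hee'
          simp only [hz, zero_mul, Finset.sum_const_zero]
    -- orthogonality of the combination with every codeword
    have horthall : ∀ cc ∈ C, ∑ j : Fin nb × Fin u, ∑ i : Fin l,
        (∑ ρ, P ρ (j, i) * x ρ) * cc j i = 0 := by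
      intro cc hcc
      have h1 : ∀ ρ, ∑ j : Fin nb × Fin u, ∑ i : Fin l, P ρ (j, i) * cc j i = 0 :=
        fun ρ => hdual ρ cc hcc
      calc ∑ j : Fin nb × Fin u, ∑ i : Fin l, (∑ ρ, P ρ (j, i) * x ρ) * cc j i
          = ∑ j : Fin nb × Fin u, ∑ i : Fin l, ∑ ρ, x ρ * (P ρ (j, i) * cc j i) := by
            refine Finset.sum_congr rfl fun j _ => Finset.sum_congr rfl fun i _ => ?_
            rw [Finset.sum_mul]
            exact Finset.sum_congr rfl fun ρ _ => by ring
        _ = ∑ j : Fin nb × Fin u, ∑ ρ, ∑ i : Fin l, x ρ * (P ρ (j, i) * cc j i) :=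
            Finset.sum_congr rfl fun j _ => Finset.sum_comm
        _ = ∑ ρ, ∑ j : Fin nb × Fin u, ∑ i : Fin l, x ρ * (P ρ (j, i) * cc j i) :=
            Finset.sum_comm
        _ = ∑ ρ, x ρ * ∑ j : Fin nb × Fin u, ∑ i : Fin l, P ρ (j, i) * cc j i := by
            refine Finset.sum_congr rfl fun ρ _ => ?_
            rw [Finset.mul_sum]
            exact Finset.sum_congr rfl fun j _ => by rw [Finset.mul_sum]
        _ = 0 := by simp [h1]
    -- the combination vanishes identically
    have hpzero : ∀ j : Fin nb × Fin u, ∀ i : Fin l, ∑ ρ, P ρ (j, i) * x ρ = 0 := by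
      intro j i
      by_cases hj : j ∈ SJ
      · obtain ⟨cc, hcc⟩ := hsurj
          (fun j' i' => if (j' : Fin nb × Fin u) = j ∧ i' = i then (1 : F) else 0)
        have horth := horthall (cc : (Fin nb × Fin u) → Fin l → F) cc.2
        have hccval : ∀ (j' : Fin nb × Fin u), j' ∈ SJ → ∀ i' : Fin l,
            (cc : (Fin nb × Fin u) → Fin l → F) j' i'
              = if j' = j ∧ i' = i then (1 : F) else 0 := by
          intro j' hj' i'
          have := congrFun (congrFun hcc ⟨j', hj'⟩) i'
          simpa [hproj] using this
        have hstep : ∑ j' ∈ SJ, ∑ i' : Fin l,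
            (∑ ρ, P ρ (j', i') * x ρ) * (cc : (Fin nb × Fin u) → Fin l → F) j' i'
            = ∑ j' : Fin nb × Fin u, ∑ i' : Fin l,
            (∑ ρ, P ρ (j', i') * x ρ) * (cc : (Fin nb × Fin u) → Fin l → F) j' i' := by
          apply Finset.sum_subset (Finset.subset_univ SJ)
          intro j' _ hj'
          exact Finset.sum_eq_zero fun i' _ => by rw [hsupp j' hj' i', zero_mul]
        have hval : ∑ j' ∈ SJ, ∑ i' : Fin l,
            (∑ ρ, P ρ (j', i') * x ρ) * (cc : (Fin nb × Fin u) → Fin l → F) j' i'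
            = ∑ ρ, P ρ (j, i) * x ρ := by
          rw [Finset.sum_eq_single_of_mem j hj]
          · rw [Finset.sum_eq_single_of_mem i (Finset.mem_univ i)]
            · rw [hccval j hj i]
              simp
            · intro i' _ hi'
              rw [hccval j hj i']
              simp [hi']
          · intro j' hj' hne
            exact Finset.sum_eq_zero fun i' _ => by rw [hccval j' hj' i']; simp [hne]
        rw [← hval, hstep]
        exact horth
      · exact hsupp j hj i
    -- injectivity on the failed nodes forces x = 0
    have hM1 : Module.finrank F ↥(LinearMap.range (Matrix.mulVecLin
        (Matrix.of fun ρ (bi : Fin h × Fin l) => P ρ ((e', g' bi.1), bi.2))ᵀ)) = h * l := by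
      have h9 := Matrix.rank_transpose
        (Matrix.of fun ρ (bi : Fin h × Fin l) => P ρ ((e', g' bi.1), bi.2))
      rw [hrank1] at h9
      exact h9
    have hxker : x ∈ LinearMap.ker (Matrix.mulVecLin
        (Matrix.of fun ρ (bi : Fin h × Fin l) => P ρ ((e', g' bi.1), bi.2))ᵀ) := by
      rw [LinearMap.mem_ker]
      funext bi
      simp only [Matrix.mulVecLin_apply, Matrix.mulVec, dotProduct,
        Matrix.transpose_apply, Matrix.of_apply, Pi.zero_apply]
      exact hpzero (e', g' bi.1) bi.2
    have hkerbot : LinearMap.ker (Matrix.mulVecLin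
        (Matrix.of fun ρ (bi : Fin h × Fin l) => P ρ ((e', g' bi.1), bi.2))ᵀ) = ⊥ := by
      have h5 := LinearMap.finrank_range_add_finrank_ker (Matrix.mulVecLin
        (Matrix.of fun ρ (bi : Fin h × Fin l) => P ρ ((e', g' bi.1), bi.2))ᵀ)
      rw [hM1] at h5
      have h6 : Module.finrank F (Fin (h * l) → F) = h * l := by
        rw [Module.finrank_pi]; exact Fintype.card_fin _
      rw [h6] at h5
      exact Submodule.finrank_eq_zero.1 (by omega)
    rw [hkerbot] at hxker
    simpa using hxker
  -- dimension count
  have hcount := finrank_le_iInf_ker_add_sum (F := F) (E.disjSum S) cmap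
  rw [hbot, Finset.sum_disjSum] at hcount
  have hV : Module.finrank F (Fin (h * l) → F) = h * l := by
    rw [Module.finrank_pi]; exact Fintype.card_fin _
  rw [hV, finrank_bot, zero_add] at hcount
  -- rack terms
  have hrackval : ∀ e ∈ E,
      sb * Module.finrank F ↥(LinearMap.range (cmap (Sum.inl e))) = h * l := by
    intro e he
    have heq : Module.finrank F ↥(LinearMap.range (cmap (Sum.inl e))) = (Pe e).rank := by
      show Module.finrank F ↥(LinearMap.range (Matrix.mulVecLin (Pe e)ᵀ)) = (Pe e).rank
      rw [← Matrix.rank_transpose (Pe e)]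
      rfl
    rw [heq]
    exact hrankR e (hEsubR he)
  -- node terms
  have hnodeval : ∀ g ∈ S, Module.finrank F ↥(LinearMap.range (cmap (Sum.inr g))) ≤
      (Finset.univ.filter (fun i : Fin l => ∃ ρ, P ρ ((e0, g), i) ≠ 0)).card := by
    intro g hg
    have hb := rank_range_le_support (Qm g)
      (({g} : Finset (Fin u)) ×ˢ (Finset.univ.filter
        (fun i : Fin l => ∃ ρ, P ρ ((e0, g), i) ≠ 0)))
      (by
        rintro r ⟨g1, i⟩ hmem
        simp only [Finset.mem_product, Finset.mem_singleton, Finset.mem_filter,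
          Finset.mem_univ, true_and, not_and] at hmem
        by_cases hg1 : g1 = g
        · subst hg1
          have hni : ¬ ∃ ρ, P ρ ((e0, g1), i) ≠ 0 := hmem rfl
          push_neg at hni
          simp [hQm, hni r]
        · simp [hQm, hg1])
    rw [Finset.card_product, Finset.card_singleton, one_mul] at hb
    exact hb
  -- assemble
  have hA1 : sb * ∑ e ∈ E, Module.finrank F ↥(LinearMap.range (cmap (Sum.inl e)))
      = (sb - 1) * (h * l) := by
    rw [Finset.mul_sum, Finset.sum_congr rfl hrackval, Finset.sum_const, hEcard,
      smul_eq_mul]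
  have hA2 : ∑ g ∈ S, Module.finrank F ↥(LinearMap.range (cmap (Sum.inr g)))
      ≤ ∑ g ∈ S, (Finset.univ.filter (fun i : Fin l => ∃ ρ, P ρ ((e0, g), i) ≠ 0)).card :=
    Finset.sum_le_sum hnodeval
  -- final arithmetic
  have hmul : sb * (h * l) ≤ sb * (∑ e ∈ E, Module.finrank F ↥(LinearMap.range (cmap (Sum.inl e)))
      + ∑ g ∈ S, Module.finrank F ↥(LinearMap.range (cmap (Sum.inr g)))) :=
    Nat.mul_le_mul_left sb hcount
  rw [Nat.mul_add, hA1] at hmul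
  have hmul2 : sb * ∑ g ∈ S, Module.finrank F ↥(LinearMap.range (cmap (Sum.inr g)))
      ≤ sb * ∑ g ∈ S, (Finset.univ.filter
        (fun i : Fin l => ∃ ρ, P ρ ((e0, g), i) ≠ 0)).card :=
    Nat.mul_le_mul_left sb hA2
  have hsb1 : sb = (sb - 1) + 1 := by omega
  have hexp : sb * (h * l) = (sb - 1) * (h * l) + h * l := by
    conv_lhs => rw [hsb1]
    ring
  omega


/-- **Theorem 1 (equality characterization of the access bound).**
Under the hypotheses of the total access bound of Theorem 1, assuming `v > 0`,
the total access `s̄(u−v) · ∑_{e∈R} acs(P̄_e) = h·d̄·u·l` holds with equality if and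
only if `s̄(u−v) · acs(P_{eu+g}) = h·l` for every `e ∈ R` and every `g`. -/
theorem access_bound_equality
    (F : Type*) [Field F] [Fintype F] [DecidableEq F]
    (u nb kb v db sb l h : ℕ)
    (hu : 1 < u) (hkb : 1 ≤ kb) (hnb : kb < nb) (hv : v < u)
    (hdb1 : kb ≤ db) (hdb2 : db ≤ nb - 1) (hsb : sb = db - kb + 1)
    (hh1 : 1 ≤ h) (hh2 : h ≤ u) (hh3 : h + v ≤ sb * u)
    (C : Submodule F ((Fin nb × Fin u) → Fin l → F))
    (hdim : Module.finrank F C = (kb * u + v) * l)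
    (hMDS : ∀ c ∈ C, ∀ S : Finset (Fin nb × Fin u), S.card = kb * u + v →
      (∀ j ∈ S, c j = 0) → c = 0)
    (P : Matrix (Fin (h * l)) ((Fin nb × Fin u) × Fin l) F)
    (hdual : ∀ ρ : Fin (h * l), ∀ c ∈ C,
      ∑ j : Fin nb × Fin u, ∑ i : Fin l, P ρ (j, i) * c j i = 0)
    (e' : Fin nb) (g' : Fin h → Fin u) (hg' : Function.Injective g')
    (hrank1 : (Matrix.of fun ρ (bi : Fin h × Fin l) =>
      P ρ ((e', g' bi.1), bi.2)).rank = h * l)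
    (R : Finset (Fin nb)) (hR : R.card = db) (he'R : e' ∉ R)
    (hzero : ∀ e : Fin nb, e ∉ R → e ≠ e' → ∀ ρ g i, P ρ ((e, g), i) = 0)
    (hrankR : ∀ e ∈ R,
      sb * (Matrix.of fun ρ (gi : Fin u × Fin l) =>
        P ρ ((e, gi.1), gi.2)).rank = h * l)
    (hv0 : 0 < v) :
    (sb * (u - v) *
        ∑ e ∈ R, (Finset.univ.filter (fun gi : Fin u × Fin l =>
          ∃ ρ, P ρ ((e, gi.1), gi.2) ≠ 0)).card = h * (db * (u * l)))
      ↔ ∀ e ∈ R, ∀ g : Fin u,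
          sb * (u - v) * (Finset.univ.filter (fun i : Fin l =>
            ∃ ρ, P ρ ((e, g), i) ≠ 0)).card = h * l := by
  have key : ∀ e0 ∈ R, ∀ S : Finset (Fin u), S.card = u - v →
      h * l ≤ sb * ∑ g ∈ S, (Finset.univ.filter
        (fun i : Fin l => ∃ ρ, P ρ ((e0, g), i) ≠ 0)).card :=
    fun e0 he0 S hS => access_key F u nb kb v db sb l h hkb hv hdb1 hsb C hdim hMDS
      P hdual e' g' hrank1 R hR he'R hzero hrankR e0 he0 S hS
  set a : Fin nb → Fin u → ℕ := fun e g =>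
    (Finset.univ.filter (fun i : Fin l => ∃ ρ, P ρ ((e, g), i) ≠ 0)).card with ha
  set b : Fin nb → Fin u → ℕ := fun e g => sb * (u - v) * a e g with hb
  have hsplit : ∀ e : Fin nb,
      (Finset.univ.filter (fun gi : Fin u × Fin l =>
        ∃ ρ, P ρ ((e, gi.1), gi.2) ≠ 0)).card = ∑ g : Fin u, a e g := by
    intro e
    rw [Finset.card_filter, Fintype.sum_prod_type]
    exact Finset.sum_congr rfl fun g _ => by
      simp only [ha]
      rw [Finset.card_filter]
  have hsubb : ∀ e ∈ R, ∀ S ⊆ (Finset.univ : Finset (Fin u)), S.card = u - v →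
      (u - v) * (h * l) ≤ ∑ g ∈ S, b e g := by
    intro e he S _ hS
    have hk := key e he S hS
    have hEq : ∑ g ∈ S, b e g = (u - v) * (sb * ∑ g ∈ S, a e g) := by
      simp only [hb]
      rw [← Finset.mul_sum]
      ring
    rw [hEq]
    exact Nat.mul_le_mul_left _ hk
  have hracksum : ∀ e ∈ R, u * (h * l) ≤ ∑ g : Fin u, b e g := by
    intro e he
    have h' := aux_sum_ge (u - v) (h * l) (by omega) v Finset.univ (b e)
      (by rw [Finset.card_univ, Fintype.card_fin]; omega)
      (fun S hSu hSc => hsubb e he S hSu hSc)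
    rwa [Finset.card_univ, Fintype.card_fin] at h'
  constructor
  · intro htot e he g
    have htot' : ∑ e ∈ R, ∑ g : Fin u, b e g = R.card * (u * (h * l)) := by
      calc ∑ e ∈ R, ∑ g : Fin u, b e g
          = sb * (u - v) * ∑ e ∈ R, ∑ g : Fin u, a e g := by
            rw [Finset.mul_sum]
            exact Finset.sum_congr rfl fun e _ => by
              simp only [hb]; rw [← Finset.mul_sum]
        _ = sb * (u - v) * ∑ e ∈ R, (Finset.univ.filter (fun gi : Fin u × Fin l =>
              ∃ ρ, P ρ ((e, gi.1), gi.2) ≠ 0)).card := by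
            rw [Finset.sum_congr rfl fun e _ => (hsplit e).symm]
        _ = h * (db * (u * l)) := htot
        _ = R.card * (u * (h * l)) := by rw [hR]; ring
    have heq := aux_eq_of_ge R (fun e => ∑ g : Fin u, b e g) (u * (h * l))
      hracksum htot' e he
    have hallg := aux_all_eq (u - v) (h * l) (by omega) Finset.univ (b e)
      (by rw [Finset.card_univ, Fintype.card_fin]; omega)
      (fun S hSu hSc => hsubb e he S hSu hSc)
      (by rw [Finset.card_univ, Fintype.card_fin]; exact heq)
    exact hallg g (Finset.mem_univ g)
  · intro hpt
    calc sb * (u - v) * ∑ e ∈ R, (Finset.univ.filter (fun gi : Fin u × Fin l =>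
          ∃ ρ, P ρ ((e, gi.1), gi.2) ≠ 0)).card
        = sb * (u - v) * ∑ e ∈ R, ∑ g : Fin u, a e g := by
          rw [Finset.sum_congr rfl fun e _ => hsplit e]
      _ = ∑ e ∈ R, ∑ g : Fin u, b e g := by
          rw [Finset.mul_sum]
          exact Finset.sum_congr rfl fun e _ => by
            simp only [hb]; rw [← Finset.mul_sum]
      _ = ∑ e ∈ R, ∑ _g : Fin u, h * l :=
          Finset.sum_congr rfl fun e he => Finset.sum_congr rfl fun g _ => hpt e he g
      _ = h * (db * (u * l)) := by
          simp only [Finset.sum_const, Finset.card_univ, Fintype.card_fin, smul_eq_mul]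
          rw [hR]
          ring
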